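/- (Quantitative monotonicity) If M β-reduces to N in m steps, then M* β-reduces to N* in at most 2^(|M|^(2^m)) steps. -/

import Mathlib

inductive Lam : Type
  | var : ℕ → Lam
  | lam : Lam → Lam
  | app : Lam → Lam → Lam
  deriving DecidableEq

namespace Lam

/-- term size -/
def size : Lam → ℕ
  | var _ => 1
  | lam M => 1 + M.size
  | app M N => 1 + M.size + N.size

/-- lift (shift) free variables ≥ d by 1 -/
def lift (d : ℕ) : Lam → Lam
  | var n => if n < d then var n else var (n+1)
  | lam M => lam (M.lift (d+1))
  | app M N => app (M.lift d) (N.lift d)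

/-- capture-avoiding substitution of N for the free variable x (de Bruijn) -/
def subst : Lam → ℕ → Lam → Lam
  | var n, x, N => if n = x then N else if x < n then var (n-1) else var n
  | lam M, x, N => lam (M.subst (x+1) (N.lift 0))
  | app M P, x, N => app (M.subst x N) (P.subst x N)

/-- number of free occurrences of the variable x -/
def count : Lam → ℕ → ℕ
  | var n, x => if n = x then 1 else 0
  | lam M, x => M.count (x+1)
  | app M N, x => M.count x + N.count x

/-- one-step β-reduction -/
inductive Step : Lam → Lam → Prop
  | beta (M N : Lam) : Step (app (lam M) N) (M.subst 0 N)
  | appL {M M' : Lam} (N : Lam) : Step M M' → Step (app M N) (app M' N)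
  | appR (M : Lam) {N N' : Lam} : Step N N' → Step (app M N) (app M N')
  | abs {M M' : Lam} : Step M M' → Step (lam M) (lam M')

/-- many-step β-reduction (reflexive-transitive closure) -/
def Red : Lam → Lam → Prop := Relation.ReflTransGen Step

/-- n-step β-reduction -/
def Steps : ℕ → Lam → Lam → Prop
  | 0, M, N => M = N
  | n+1, M, N => ∃ P, Step M P ∧ Steps n P N

/-- Takahashi translation (Gross-Knuth complete development) -/
def star : Lam → Lam
  | var n => var n
  | lam M => lam (star M)
  | app (lam M) N => (star M).subst 0 (star N)
  | app (var n) N => app (var n) (star N)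
  | app (app M₁ M₂) N => app (star (app M₁ M₂)) (star N)

/-- iterated Takahashi translation M^(n*) -/
def iterStar (n : ℕ) (M : Lam) : Lam := star^[n] M

end Lam

namespace Lam

/-! ### basic size/count lemmas -/

theorem size_pos (M : Lam) : 1 ≤ M.size := by
  induction M with
  | var n => simp [size]
  | lam M ih => simp [size]
  | app M N ih1 ih2 => simp [size]; omega

theorem size_lift (M : Lam) : ∀ d, (M.lift d).size = M.size := by
  induction M with
  | var n => intro d; unfold lift; split <;> rfl
  | lam M ih => intro d; simp [lift, size, ih]
  | app M N ih1 ih2 => intro d; simp [lift, size, ih1, ih2]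

theorem count_le_size (M : Lam) : ∀ x, M.count x ≤ M.size := by
  induction M with
  | var n => intro x; by_cases h : n = x <;> simp [count, size, h]
  | lam M ih => intro x; simp [count, size]; have := ih (x+1); omega
  | app M N ih1 ih2 =>
      intro x; simp [count, size]; have := ih1 x; have := ih2 x; omega

theorem size_subst (M : Lam) :
    ∀ x N, (M.subst x N).size = M.size + M.count x * (N.size - 1) := by
  induction M with
  | var n =>
      intro x N
      by_cases h : n = x
      · have := size_pos N; simp [subst, count, size, h]; omega
      · by_cases h' : x < n <;> simp [subst, count, size, h, h']
  | lam M ih =>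
      intro x N
      simp [subst, count, size, ih, size_lift]; omega
  | app M P ih1 ih2 =>
      intro x N
      simp [subst, count, size, ih1, ih2]; ring

theorem size_subst_ge (M : Lam) (x : ℕ) (N : Lam) : M.size ≤ (M.subst x N).size := by
  rw [size_subst]; omega

theorem size_subst_le (M : Lam) (x : ℕ) (N : Lam) :
    (M.subst x N).size ≤ M.size * N.size := by
  rw [size_subst]
  have h1 := count_le_size M x
  have h2 := size_pos N
  have h3 := size_pos M
  calc M.size + M.count x * (N.size - 1) ≤ M.size + M.size * (N.size - 1) := by
        have := Nat.mul_le_mul_right (N.size - 1) h1; omega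
    _ = M.size * (1 + (N.size - 1)) := by ring
    _ = M.size * N.size := by congr 1; omega

/-! ### de Bruijn commutation lemmas -/

theorem lift_lift (M : Lam) : ∀ e d, e ≤ d →
    (M.lift e).lift (d+1) = (M.lift d).lift e := by
  induction M with
  | var n =>
      intro e d h
      by_cases h1 : n < e
      · simp [lift, h1, show n < d by omega, show n < d + 1 by omega]
      · by_cases h2 : n < d
        · simp [lift, h1, h2, show n + 1 < d + 1 by omega, show ¬ n + 1 < e by omega]
        · simp [lift, h1, h2, show ¬ n + 1 < d + 1 by omega,
            show ¬ n + 1 < e by omega, show ¬ n + 1 + 1 < e by omega]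
  | lam M ih =>
      intro e d h; simp [lift]; exact ih (e+1) (d+1) (by omega)
  | app M N ih1 ih2 =>
      intro e d h; simp [lift, ih1 e d h, ih2 e d h]

theorem lift_subst_high (M : Lam) : ∀ x d V, x ≤ d →
    (M.subst x V).lift d = (M.lift (d+1)).subst x (V.lift d) := by
  induction M with
  | var n =>
      intro x d V h
      by_cases h1 : n = x
      · subst h1; simp [subst, lift, show n < d + 1 by omega]
      · by_cases h2 : x < n
        · by_cases h3 : n ≤ d
          · simp [subst, lift, h1, h2, show n - 1 < d by omega,
              show n < d + 1 by omega]
          · simp [subst, lift, h1, h2, show ¬ n - 1 < d by omega,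
              show ¬ n < d + 1 by omega, show n - 1 + 1 = n by omega,
              show ¬ n + 1 = x by omega, show x < n + 1 by omega]
        · simp [subst, lift, h1, h2, show n < d by omega, show n < d + 1 by omega]
  | lam M ih =>
      intro x d V h
      simp [subst, lift]
      rw [ih (x+1) (d+1) (V.lift 0) (by omega), lift_lift V 0 d (by omega)]
  | app M P ih1 ih2 =>
      intro x d V h; simp [subst, lift, ih1 x d V h, ih2 x d V h]

theorem lift_subst_low (M : Lam) : ∀ x d V, d ≤ x →
    (M.subst x V).lift d = (M.lift d).subst (x+1) (V.lift d) := by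
  induction M with
  | var n =>
      intro x d V h
      by_cases h1 : n = x
      · subst h1; simp [subst, lift, show ¬ n < d by omega]
      · by_cases h2 : x < n
        · simp [subst, lift, h1, h2, show ¬ n - 1 < d by omega,
            show ¬ n < d by omega, show n - 1 + 1 = n by omega,
            show ¬ n + 1 = x + 1 by omega, show x + 1 < n + 1 by omega]
        · by_cases h3 : n < d
          · simp [subst, lift, h1, h2, h3, show ¬ n = x + 1 by omega,
              show ¬ x + 1 < n by omega]
          · simp [subst, lift, h1, h2, h3, show ¬ n + 1 = x + 1 by omega,
              show ¬ x + 1 < n + 1 by omega]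
  | lam M ih =>
      intro x d V h
      simp [subst, lift]
      rw [ih (x+1) (d+1) (V.lift 0) (by omega), lift_lift V 0 d (by omega)]
  | app M P ih1 ih2 =>
      intro x d V h; simp [subst, lift, ih1 x d V h, ih2 x d V h]

theorem subst_lift (M : Lam) : ∀ d Z, (M.lift d).subst d Z = M := by
  induction M with
  | var n =>
      intro d Z
      by_cases h : n < d
      · simp [lift, subst, h, show ¬ n = d by omega, show ¬ d < n by omega]
      · simp [lift, subst, h, show ¬ n + 1 = d by omega, show d < n + 1 by omega]
  | lam M ih => intro d Z; simp [lift, subst, ih]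
  | app M P ih1 ih2 => intro d Z; simp [lift, subst, ih1, ih2]

theorem subst_subst (M : Lam) : ∀ y x V W, y ≤ x →
    (M.subst y V).subst x W
      = (M.subst (x+1) (W.lift y)).subst y (V.subst x W) := by
  induction M with
  | var n =>
      intro y x V W h
      by_cases h1 : n = y
      · subst h1
        simp [subst, show ¬ n = x + 1 by omega, show ¬ x + 1 < n by omega]
      · by_cases h2 : n = x + 1
        · subst h2
          simp [subst, show ¬ x + 1 = y by omega, show y < x + 1 by omega,
            show x + 1 - 1 = x by omega, subst_lift]
        · by_cases h3 : y < n
          · by_cases h4 : x < n - 1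
            · simp [subst, h1, h2, h3, h4, show ¬ n - 1 = x by omega,
                show x + 1 < n by omega, show ¬ n - 1 = y by omega,
                show y < n - 1 by omega]
            · by_cases h5 : n - 1 = x
              · omega
              · simp [subst, h1, h2, h3, h4, h5, show ¬ x + 1 < n by omega,
                  show ¬ n = y by omega, show y < n by omega]
          · simp [subst, h1, h2, show ¬ y < n by omega, h3,
              show ¬ n = x by omega, show ¬ x < n by omega,
              show ¬ x + 1 < n by omega]
  | lam M ih =>
      intro y x V W h
      simp [subst]
      rw [ih (y+1) (x+1) (V.lift 0) (W.lift 0) (by omega),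
        lift_lift W 0 y (by omega),
        lift_subst_low V x 0 W (by omega)]
  | app M P ih1 ih2 =>
      intro y x V W h
      simp [subst, ih1 y x V W h, ih2 y x V W h]

/-! ### step stability -/

theorem step_lift {M N : Lam} (h : Step M N) : ∀ d, Step (M.lift d) (N.lift d) := by
  induction h with
  | beta P Q =>
      intro d
      have : (P.subst 0 Q).lift d = (P.lift (d+1)).subst 0 (Q.lift d) :=
        lift_subst_high P 0 d Q (by omega)
      rw [this]
      exact Step.beta _ _
  | appL N _ ih => intro d; exact Step.appL _ (ih d)
  | appR M _ ih => intro d; exact Step.appR _ (ih d)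
  | abs _ ih => intro d; exact Step.abs (ih (d+1))

theorem step_subst {M N : Lam} (h : Step M N) :
    ∀ x P, Step (M.subst x P) (N.subst x P) := by
  induction h with
  | beta A B =>
      intro x P
      have : (A.subst 0 B).subst x P
          = (A.subst (x+1) (P.lift 0)).subst 0 (B.subst x P) :=
        subst_subst A 0 x B P (by omega)
      rw [this]
      exact Step.beta _ _
  | appL N _ ih => intro x P; exact Step.appL _ (ih x P)
  | appR M _ ih => intro x P; exact Step.appR _ (ih x P)
  | abs _ ih => intro x P; exact Step.abs (ih (x+1) (P.lift 0))

/-! ### Steps machinery -/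

theorem steps_trans : ∀ {a : ℕ} {M P : Lam} {b : ℕ} {N : Lam},
    Steps a M P → Steps b P N → Steps (a + b) M N := by
  intro a
  induction a with
  | zero =>
      intro M P b N h1 h2
      obtain rfl : M = P := h1
      simpa [Nat.zero_add] using h2
  | succ a ih =>
      intro M P b N h1 h2
      obtain ⟨R, hR, hs⟩ := h1
      rw [Nat.succ_add]
      exact ⟨R, hR, ih hs h2⟩

theorem steps_single {M N : Lam} (h : Step M N) : Steps 1 M N := ⟨N, h, rfl⟩

theorem steps_map (f : Lam → Lam) (hf : ∀ {A B : Lam}, Step A B → Step (f A) (f B)) :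
    ∀ {l : ℕ} {M N : Lam}, Steps l M N → Steps l (f M) (f N) := by
  intro l
  induction l with
  | zero => intro M N h; obtain rfl : M = N := h; rfl
  | succ l ih =>
      intro M N h
      obtain ⟨R, hR, hs⟩ := h
      exact ⟨f R, hf hR, ih hs⟩

theorem steps_mul_map (f : Lam → Lam) (c : ℕ)
    (hf : ∀ {A B : Lam}, Step A B → Steps c (f A) (f B)) :
    ∀ {l : ℕ} {M N : Lam}, Steps l M N → Steps (c * l) (f M) (f N) := by
  intro l
  induction l with
  | zero => intro M N h; obtain rfl : M = N := h; simp [Nat.mul_zero]; rfl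
  | succ l ih =>
      intro M N h
      obtain ⟨R, hR, hs⟩ := h
      have : c * (l + 1) = c + c * l := by ring
      rw [this]
      exact steps_trans (hf hR) (ih hs)

theorem steps_subst_right (U : Lam) :
    ∀ (y : ℕ) {V V' : Lam}, Step V V' →
      Steps (U.count y) (U.subst y V) (U.subst y V') := by
  induction U with
  | var n =>
      intro y V V' h
      by_cases h1 : n = y
      · simp [subst, count, h1]; exact steps_single h
      · simp [subst, count, h1]
        by_cases h2 : y < n <;> simp [h2] <;> rfl
  | lam M ih =>
      intro y V V' h
      simp only [subst, count]
      exact steps_map lam (fun hs => Step.abs hs) (ih (y+1) (step_lift h 0))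
  | app M P ih1 ih2 =>
      intro y V V' h
      simp only [subst, count]
      exact steps_trans
        (steps_map (fun t => app t (P.subst y V)) (fun hs => Step.appL _ hs) (ih1 y h))
        (steps_map (fun t => app (M.subst y V') t) (fun hs => Step.appR _ hs) (ih2 y h))

theorem steps_subst_right_steps (U : Lam) (y : ℕ) {l : ℕ} {V V' : Lam}
    (h : Steps l V V') :
    Steps (U.count y * l) (U.subst y V) (U.subst y V') :=
  steps_mul_map (fun v => U.subst y v) (U.count y)
    (fun hs => steps_subst_right U y hs) h

theorem steps_subst_left {l : ℕ} {U U' : Lam} (h : Steps l U U') (y : ℕ) (V : Lam) :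
    Steps l (U.subst y V) (U'.subst y V) :=
  steps_map (fun u => u.subst y V) (fun hs => step_subst hs y V) h

end Lam
namespace Lam

@[simp] theorem star_var (n : ℕ) : (var n).star = var n := rfl
@[simp] theorem star_lam (M : Lam) : (lam M).star = lam M.star := rfl
@[simp] theorem star_app_lam (M N : Lam) :
    (app (lam M) N).star = (M.star).subst 0 N.star := rfl
@[simp] theorem star_app_var (n : ℕ) (N : Lam) :
    (app (var n) N).star = app (var n) N.star := rfl
@[simp] theorem star_app_app (M₁ M₂ N : Lam) :
    (app (app M₁ M₂) N).star = app (app M₁ M₂).star N.star := rfl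

theorem star_lift (M : Lam) : ∀ d, (M.lift d).star = M.star.lift d := by
  induction M with
  | var n => intro d; by_cases h : n < d <;> simp [lift, h]
  | lam M ih => intro d; simp [lift, ih]
  | app A B ihA ihB =>
      intro d
      cases A with
      | var n =>
          by_cases h : n < d <;> simp [lift, h, ihB]
      | lam P =>
          have hP : (P.lift (d+1)).star = P.star.lift (d+1) := by
            have := ihA d; simpa [lift] using this
          simp [lift, hP, ihB, lift_subst_high P.star 0 d B.star (by omega)]
      | app A1 A2 =>
          have h1 : ((A1.lift d).app (A2.lift d)).star = ((app A1 A2).star).lift d := by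
            have := ihA d; simpa [lift] using this
          simp [lift, h1, ihB]

theorem size_star : ∀ (M : Lam), M.star.size ≤ 2 ^ (M.size - 1)
  | var n => by simp [size]
  | lam M => by
      have ih := size_star M
      have h1 := size_pos M
      have h2 : (1:ℕ) ≤ 2 ^ (M.size - 1) := Nat.one_le_two_pow
      have e : (2:ℕ) ^ M.size = 2 ^ (M.size - 1) * 2 := by
        rw [← pow_succ]; congr 1; omega
      simp only [star_lam, size]
      have e2 : 1 + M.size - 1 = M.size := by omega
      rw [e2, e]
      omega
  | app (var n) B => by
      have ihB := size_star B
      have hB1 := size_pos B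
      have hB2 : (1:ℕ) ≤ 2 ^ (B.size - 1) := Nat.one_le_two_pow
      simp only [star_app_var, size]
      have e1 : 1 + 1 + B.size - 1 = B.size + 1 := by omega
      rw [e1]
      have e2 : (2:ℕ) ^ (B.size + 1) = 2 ^ (B.size - 1) * 2 * 2 := by
        rw [← pow_succ, ← pow_succ]; congr 1; omega
      omega
  | app (lam P) B => by
      have hP := size_star P
      have ihB := size_star B
      have hPp := size_pos P
      have hB1 := size_pos B
      calc ((app (lam P) B).star).size
          = (P.star.subst 0 B.star).size := by rw [star_app_lam]
        _ ≤ P.star.size * B.star.size := size_subst_le _ _ _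
        _ ≤ 2 ^ (P.size - 1) * 2 ^ (B.size - 1) :=
            Nat.mul_le_mul hP ihB
        _ = 2 ^ (P.size - 1 + (B.size - 1)) := by rw [pow_add]
        _ ≤ 2 ^ ((app (lam P) B).size - 1) := by
            apply Nat.pow_le_pow_right (by omega)
            simp [size]; omega
  | app (app A1 A2) B => by
      have ihA := size_star (app A1 A2)
      have ihB := size_star B
      have hB1 := size_pos B
      have hB2 : (1:ℕ) ≤ 2 ^ (B.size - 1) := Nat.one_le_two_pow
      have hA1 := size_pos A1
      have hA2 := size_pos A2
      simp only [star_app_app, size]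
      have e1 : 1 + (1 + A1.size + A2.size) + B.size - 1
          = A1.size + A2.size + B.size + 1 := by omega
      rw [e1]
      have ihA' : (app A1 A2).star.size ≤ 2 ^ (A1.size + A2.size) := by
        have e : (app A1 A2).size - 1 = A1.size + A2.size := by
          simp [size]; omega
        rwa [e] at ihA
      have e2 : (2:ℕ) ^ (A1.size + A2.size + B.size + 1)
          = 2 ^ (A1.size + A2.size) * 2 ^ (B.size - 1) * 4 := by
        rw [show A1.size + A2.size + B.size + 1
            = (A1.size + A2.size) + (B.size - 1) + 2 by omega,
          pow_add, pow_add]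
        ring
      rw [e2]
      have hx : (app A1 A2).star.size
          ≤ 2 ^ (A1.size + A2.size) * 2 ^ (B.size - 1) :=
        le_trans ihA' (Nat.le_mul_of_pos_right _ (pow_pos (by norm_num) _))
      have hy : B.star.size ≤ 2 ^ (A1.size + A2.size) * 2 ^ (B.size - 1) :=
        le_trans ihB (Nat.le_mul_of_pos_left _ (pow_pos (by norm_num) _))
      have h1 : (1:ℕ) ≤ 2 ^ (A1.size + A2.size) * 2 ^ (B.size - 1) :=
        Nat.one_le_iff_ne_zero.mpr (by positivity)
      omega
termination_by M => M.size
decreasing_by all_goals (simp [size]; try omega)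

theorem size_step {M N : Lam} (h : Step M N) : N.size < M.size ^ 2 := by
  induction h with
  | beta P Q =>
      have h1 := size_subst_le P 0 Q
      have h2 := size_pos P
      have h3 := size_pos Q
      simp only [size]
      nlinarith
  | appL B hs ih =>
      rename_i A A'
      have h1 := size_pos A
      have h2 := size_pos B
      simp only [size]
      nlinarith
  | appR A hs ih =>
      rename_i B B'
      have h1 := size_pos A
      have h2 := size_pos B
      simp only [size]
      nlinarith
  | abs hs ih =>
      rename_i P P'
      have h1 := size_pos P
      simp only [size]
      nlinarith

theorem step_size_two {M N : Lam} (h : Step M N) : 2 ≤ M.size := by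
  cases h with
  | beta P Q =>
      have := size_pos P; have := size_pos Q; simp only [size]; omega
  | appL B h =>
      rename_i A A'
      have := size_pos A; have := size_pos B; simp only [size]; omega
  | appR A h =>
      rename_i B B'
      have := size_pos A; have := size_pos B; simp only [size]; omega
  | abs h =>
      rename_i P P'
      have := size_pos P; simp only [size]; omega

end Lam
namespace Lam

theorem lemD : ∀ (P Q : Lam) (x : ℕ),
    ∃ l, Steps l ((P.star).subst x Q.star) ((P.subst x Q).star) ∧
      l + 1 ≤ ((P.star).subst x Q.star).size
  | var n, Q, x => by
      by_cases h : n = x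
      · subst h
        refine ⟨0, by simp [subst]; exact rfl, ?_⟩
        have := size_pos ((var n).star.subst n Q.star); omega
      · by_cases h2 : x < n
        · refine ⟨0, by simp [subst, h, h2]; exact rfl, ?_⟩
          have := size_pos ((var n).star.subst x Q.star); omega
        · refine ⟨0, by simp [subst, h, h2]; exact rfl, ?_⟩
          have := size_pos ((var n).star.subst x Q.star); omega
  | lam P, Q, x => by
      obtain ⟨l, hs, hb⟩ := lemD P (Q.lift 0) (x+1)
      have E : (lam P).star.subst x Q.star
          = lam (P.star.subst (x+1) ((Q.lift 0).star)) := by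
        simp [subst, star_lift]
      have E2 : ((lam P).subst x Q).star
          = lam ((P.subst (x+1) (Q.lift 0)).star) := by
        simp [subst]
      rw [E, E2]
      refine ⟨l, steps_map lam (fun h => Step.abs h) hs, ?_⟩
      simp only [size]; omega
  | app (var n) B, Q, x => by
      obtain ⟨lB, hsB, hbB⟩ := lemD B Q x
      have hV := size_pos (B.star.subst x Q.star)
      by_cases h : n = x
      · subst h
        cases Q with
        | var m =>
            refine ⟨lB, ?_, ?_⟩
            · show Steps lB (app ((var n).subst n (var m)) (B.star.subst n (var m).star))
                ((app ((var n).subst n (var m)) (B.subst n (var m))).star)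
              simp only [subst, if_pos rfl]
              exact steps_map (fun t => app (var m) t) (fun h => Step.appR _ h) hsB
            · show lB + 1 ≤ (app ((var n).subst n (var m).star) (B.star.subst n (var m).star)).size
              simp only [subst, if_pos rfl, size, star_var] at *
              omega
        | lam R =>
            have hR := size_pos R.star
            refine ⟨lB + 1, ?_, ?_⟩
            · show Steps (lB + 1)
                (app ((var n).subst n (lam R.star)) (B.star.subst n (lam R).star))
                ((app ((var n).subst n (lam R)) (B.subst n (lam R))).star)
              simp only [subst, if_pos rfl, star_lam, star_app_lam]
              exact steps_trans
                (steps_map (fun t => app (lam R.star) t) (fun h => Step.appR _ h) hsB)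
                (steps_single (Step.beta R.star ((B.subst n (lam R)).star)))
            · show lB + 1 + 1 ≤ (app ((var n).subst n (lam R).star) (B.star.subst n (lam R).star)).size
              simp only [subst, if_pos rfl, star_lam, size] at *
              omega
        | app q1 q2 =>
            refine ⟨lB, ?_, ?_⟩
            · show Steps lB (app ((var n).subst n (app q1 q2).star) (B.star.subst n (app q1 q2).star))
                ((app ((var n).subst n (app q1 q2)) (B.subst n (app q1 q2))).star)
              simp only [subst, if_pos rfl, star_app_app]
              exact steps_map (fun t => app ((app q1 q2).star) t) (fun h => Step.appR _ h) hsB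
            · show lB + 1 ≤ (app ((var n).subst n (app q1 q2).star) (B.star.subst n (app q1 q2).star)).size
              have := size_pos ((app q1 q2).star)
              simp only [subst, if_pos rfl, size] at *
              omega
      · by_cases h2 : x < n
        · refine ⟨lB, ?_, ?_⟩
          · show Steps lB _ _
            simp only [subst, if_neg h, if_pos h2, star_app_var]
            exact steps_map (fun t => app (var (n-1)) t) (fun hh => Step.appR _ hh) hsB
          · simp only [subst, if_neg h, if_pos h2, size, star_var, star_app_var] at *
            omega
        · refine ⟨lB, ?_, ?_⟩
          · show Steps lB _ _
            simp only [subst, if_neg h, if_neg h2, star_app_var]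
            exact steps_map (fun t => app (var n) t) (fun hh => Step.appR _ hh) hsB
          · simp only [subst, if_neg h, if_neg h2, size, star_var, star_app_var] at *
            omega
  | app (lam A) B, Q, x => by
      obtain ⟨lA, hsA, hbA⟩ := lemD A (Q.lift 0) (x+1)
      obtain ⟨lB, hsB, hbB⟩ := lemD B Q x
      rw [star_lift] at hsA hbA
      set U := A.star.subst (x+1) (Q.star.lift 0) with hU
      set V := B.star.subst x Q.star with hV
      have E : ((app (lam A) B).star).subst x Q.star = U.subst 0 V := by
        simp only [star_app_lam, subst]
        exact subst_subst A.star 0 x B.star Q.star (by omega)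
      have E2 : ((app (lam A) B).subst x Q).star
          = ((A.subst (x+1) (Q.lift 0)).star).subst 0 ((B.subst x Q).star) := by
        simp only [subst, star_app_lam]
      rw [E, E2]
      refine ⟨U.count 0 * lB + lA, ?_, ?_⟩
      · exact steps_trans (steps_subst_right_steps U 0 hsB) (steps_subst_left hsA 0 _)
      · rw [size_subst U 0 V]
        have h1 : U.count 0 * lB ≤ U.count 0 * (V.size - 1) :=
          Nat.mul_le_mul_left _ (by omega)
        omega
  | app (app A1 A2) B, Q, x => by
      obtain ⟨lA, hsA, hbA⟩ := lemD (app A1 A2) Q x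
      obtain ⟨lB, hsB, hbB⟩ := lemD B Q x
      have E2 : ((app (app A1 A2) B).subst x Q).star
          = app (((app A1 A2).subst x Q).star) ((B.subst x Q).star) := by
        show (app (app (A1.subst x Q) (A2.subst x Q)) (B.subst x Q)).star = _
        rw [star_app_app]
        rfl
      refine ⟨lA + lB, ?_, ?_⟩
      · show Steps (lA + lB)
          (app ((app A1 A2).star.subst x Q.star) (B.star.subst x Q.star)) _
        rw [E2]
        exact steps_trans
          (steps_map (fun t => app t (B.star.subst x Q.star))
            (fun hh => Step.appL _ hh) hsA)
          (steps_map (fun t => app (((app A1 A2).subst x Q).star) t)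
            (fun hh => Step.appR _ hh) hsB)
      · show lA + lB + 1 ≤ (app ((app A1 A2).star.subst x Q.star) (B.star.subst x Q.star)).size
        simp only [size]
        omega
termination_by P Q x => P.size
decreasing_by all_goals (simp [size]; try omega)

end Lam
namespace Lam

theorem lemA : ∀ (M N : Lam), Step M N →
    ∃ l, Steps l M.star N.star ∧ l + 1 ≤ M.star.size
  | _, _, Step.beta P Q => by
      obtain ⟨l, hs, hb⟩ := lemD P Q 0
      exact ⟨l, hs, hb⟩
  | _, _, @Step.abs P P' hs => by
      obtain ⟨l, h1, h2⟩ := lemA P P' hs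
      refine ⟨l, steps_map lam (fun h => Step.abs h) h1, ?_⟩
      simp only [star_lam, size]; omega
  | _, _, @Step.appR A B B' hs => by
      obtain ⟨l, h1, h2⟩ := lemA B B' hs
      cases A with
      | var n =>
          refine ⟨l, steps_map (fun t => app (var n) t)
            (fun h => Step.appR _ h) h1, ?_⟩
          simp only [star_app_var, size]; omega
      | lam P =>
          refine ⟨P.star.count 0 * l, ?_, ?_⟩
          · simp only [star_app_lam]
            exact steps_subst_right_steps P.star 0 h1
          · simp only [star_app_lam]
            rw [size_subst]
            have hm : P.star.count 0 * l ≤ P.star.count 0 * (B.star.size - 1) :=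
              Nat.mul_le_mul_left _ (by omega)
            have := size_pos P.star
            omega
      | app A1 A2 =>
          refine ⟨l, steps_map (fun t => app ((app A1 A2).star) t)
            (fun h => Step.appR _ h) h1, ?_⟩
          simp only [star_app_app, size]
          have := size_pos ((app A1 A2).star)
          omega
  | _, _, @Step.appL A A' B hs => by
      cases A with
      | var n => cases hs
      | lam P =>
          cases hs with
          | abs hs' =>
              rename_i P'
              obtain ⟨l, h1, h2⟩ := lemA P P' hs'
              refine ⟨l, ?_, ?_⟩
              · simp only [star_app_lam]
                exact steps_subst_left h1 0 B.star
              · simp only [star_app_lam]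
                have := size_subst_ge P.star 0 B.star
                omega
      | app A1 A2 =>
          obtain ⟨l, h1, h2⟩ := lemA (app A1 A2) A' hs
          have hB := size_pos B.star
          cases A' with
          | var k =>
              refine ⟨l, ?_, ?_⟩
              · simp only [star_app_app, star_app_var]
                exact steps_map (fun t => app t B.star)
                  (fun h => Step.appL _ h) h1
              · simp only [star_app_app, size]; omega
          | lam R =>
              refine ⟨l + 1, ?_, ?_⟩
              · simp only [star_app_app, star_app_lam]
                exact steps_trans
                  (steps_map (fun t => app t B.star) (fun h => Step.appL _ h)
                    (by simpa using h1))
                  (steps_single (Step.beta R.star B.star))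
              · simp only [star_app_app, size]; omega
          | app C D =>
              refine ⟨l, ?_, ?_⟩
              · simp only [star_app_app]
                exact steps_map (fun t => app t B.star)
                  (fun h => Step.appL _ h) h1
              · simp only [star_app_app, size]; omega
termination_by M N h => M.size
decreasing_by all_goals (subst_vars; simp [size]; try omega)

theorem main_aux : ∀ (m : ℕ) (M N : Lam), Steps m M N →
    ∃ l, Steps l M.star N.star ∧ l + 1 ≤ 2 ^ (M.size ^ 2 ^ m) := by
  intro m
  induction m with
  | zero =>
      intro M N h
      obtain rfl : M = N := h
      exact ⟨0, rfl, Nat.one_le_two_pow⟩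
  | succ m ih =>
      intro M N h
      obtain ⟨P, h1, h2⟩ := h
      obtain ⟨l0, hs0, hb0⟩ := lemA M P h1
      obtain ⟨l', hs', hb'⟩ := ih P N h2
      refine ⟨l0 + l', steps_trans hs0 hs', ?_⟩
      have hs2 : 2 ≤ M.size := step_size_two h1
      have hP : P.size ≤ M.size ^ 2 - 1 := by
        have := size_step h1; omega
      have hE : M.size ^ 2 ^ (m+1) = (M.size ^ 2) ^ 2 ^ m := by
        rw [← pow_mul]
        congr 1
        rw [pow_succ]
        ring
      have key1 : P.size ^ 2 ^ m ≤ M.size ^ 2 ^ (m+1) - 1 := by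
        have t1 : P.size ^ 2 ^ m ≤ (M.size ^ 2 - 1) ^ 2 ^ m :=
          Nat.pow_le_pow_left hP _
        have hlt : M.size ^ 2 - 1 < M.size ^ 2 := by
          have : 1 ≤ M.size ^ 2 := Nat.one_le_pow _ _ (by omega)
          omega
        have t2 : (M.size ^ 2 - 1) ^ 2 ^ m < (M.size ^ 2) ^ 2 ^ m :=
          Nat.pow_lt_pow_left hlt (Nat.two_pow_pos m).ne'
        rw [hE]
        omega
      have key2 : M.size - 1 ≤ M.size ^ 2 ^ (m+1) - 1 := by
        have : M.size ≤ M.size ^ 2 ^ (m+1) :=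
          Nat.le_self_pow (Nat.two_pow_pos (m+1)).ne' _
        omega
      have hstar : M.star.size ≤ 2 ^ (M.size - 1) := size_star M
      have hpow : (2:ℕ) ^ (M.size - 1) ≤ 2 ^ (M.size ^ 2 ^ (m+1) - 1) :=
        Nat.pow_le_pow_right (by norm_num) key2
      have hpow2 : (2:ℕ) ^ (P.size ^ 2 ^ m) ≤ 2 ^ (M.size ^ 2 ^ (m+1) - 1) :=
        Nat.pow_le_pow_right (by norm_num) key1
      have hfin : (2:ℕ) ^ (M.size ^ 2 ^ (m+1) - 1) * 2 = 2 ^ (M.size ^ 2 ^ (m+1)) := by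
        rw [← pow_succ]
        congr 1
        have : 1 ≤ M.size ^ 2 ^ (m+1) := Nat.one_le_pow _ _ (by omega)
        omega
      omega

end Lam

/-- quantitative monotonicity: if M ↠^m N then M* ↠ N*
in at most 2^(|M|^(2^m)) steps -/
theorem star_mono_steps {m : ℕ} {M N : Lam} (h : Lam.Steps m M N) :
    ∃ l : ℕ, Lam.Steps l M.star N.star ∧ l ≤ 2 ^ (M.size ^ 2 ^ m) := by
  obtain ⟨l, hs, hb⟩ := Lam.main_aux m M N h
  exact ⟨l, hs, by omega⟩
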